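/- Let 𝒱 be a left skew-closed category and let (G, ε, δ) be a closed comonad on 𝒱: G : 𝒱 → 𝒱 is a closed functor with data (ψ₀, ψ); ε_A : GA → A and δ_A : GA → GGA are natural transformations satisfying the comonad laws ε_{GA} ∘ δ_A = 1_{GA} = G(ε_A) ∘ δ_A and δ_{GA} ∘ δ_A = G(δ_A) ∘ δ_A; and ε : G ⇒ Id and δ : G ⇒ GG are closed natural transformations (Id being the identity closed functor and GG the composite closed functor). Then the following data define another left skew-closed structure on 𝒱: hom functor ⟨A,B⟩ = [GA,B]; the same unit object I; i'_A = i_A ∘ [ψ₀,1] : [GI,A] → A; j'_A = [ε_A,1] ∘ j_A : I → [GA,A]; and L' = [v_{C,A},1] ∘ L^{GC}_{GA,B} : [GA,B] → [G[GC,A],[GC,B]], where v_{C,A} = [δ_C,1] ∘ ψ_{GC,A} : G[GC,A] → [GC,GA]. That is, these data satisfy axioms (SCC1)–(SCC5). -/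

import Mathlib

open CategoryTheory

universe v u w

/-- A left skew-closed category structure on a category `V` (Street, "Skew-closed categories"). -/
structure SkewClosedStruct (V : Type u) [Category.{v} V] where
  ihom : V → V → V
  imap : ∀ {A A' B B' : V}, (A' ⟶ A) → (B ⟶ B') → (ihom A B ⟶ ihom A' B')
  imap_id : ∀ (A B : V), imap (𝟙 A) (𝟙 B) = 𝟙 (ihom A B)
  imap_comp : ∀ {A A' A'' B B' B'' : V} (f : A' ⟶ A) (f' : A'' ⟶ A') (g : B ⟶ B') (g' : B' ⟶ B''),
      imap (f' ≫ f) (g ≫ g') = imap f g ≫ imap f' g'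
  unit : V
  i : ∀ A : V, ihom unit A ⟶ A
  i_natural : ∀ {A B : V} (f : A ⟶ B), imap (𝟙 unit) f ≫ i B = i A ≫ f
  j : ∀ A : V, unit ⟶ ihom A A
  j_natural : ∀ {A B : V} (f : A ⟶ B), j A ≫ imap (𝟙 A) f = j B ≫ imap f (𝟙 B)
  L : ∀ A B C : V, ihom B C ⟶ ihom (ihom A B) (ihom A C)
  L_natural : ∀ {B B' C C' : V} (A : V) (f : B' ⟶ B) (g : C ⟶ C'),
      imap f g ≫ L A B' C' = L A B C ≫ imap (imap (𝟙 A) f) (imap (𝟙 A) g)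
  L_extranatural : ∀ {A A' : V} (h : A' ⟶ A) (B C : V),
      L A B C ≫ imap (𝟙 (ihom A B)) (imap h (𝟙 C))
        = L A' B C ≫ imap (imap h (𝟙 B)) (𝟙 (ihom A' C))
  SCC1 : ∀ A B C D : V,
      L A C D ≫ L (ihom A B) (ihom A C) (ihom A D) ≫
          imap (L A B C) (𝟙 (ihom (ihom A B) (ihom A D)))
        = L B C D ≫ imap (𝟙 (ihom B C)) (L A B D)
  SCC2 : ∀ A C : V, L A A C ≫ imap (j A) (𝟙 (ihom A C)) ≫ i (ihom A C) = 𝟙 (ihom A C)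
  SCC3 : ∀ A B : V, j B ≫ L A B B = j (ihom A B)
  SCC4 : ∀ B C : V, L unit B C ≫ imap (𝟙 (ihom unit B)) (i C) = imap (i B) (𝟙 C)
  SCC5 : j unit ≫ i unit = 𝟙 unit

/-- A closed functor between left skew-closed categories. -/
structure ClosedFunctorStruct {V : Type u} {W : Type w} [Category.{v} V] [Category.{v} W]
    (𝒱 : SkewClosedStruct V) (𝒲 : SkewClosedStruct W) (F : V ⥤ W) where
  ψ0 : 𝒲.unit ⟶ F.obj 𝒱.unit
  ψ : ∀ A B : V, F.obj (𝒱.ihom A B) ⟶ 𝒲.ihom (F.obj A) (F.obj B)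
  ψ_natural : ∀ {A A' B B' : V} (f : A' ⟶ A) (g : B ⟶ B'),
      F.map (𝒱.imap f g) ≫ ψ A' B' = ψ A B ≫ 𝒲.imap (F.map f) (F.map g)
  SCF1 : ∀ A : V,
      ψ 𝒱.unit A ≫ 𝒲.imap ψ0 (𝟙 (F.obj A)) ≫ 𝒲.i (F.obj A) = F.map (𝒱.i A)
  SCF2 : ∀ A : V, ψ0 ≫ F.map (𝒱.j A) ≫ ψ A A = 𝒲.j (F.obj A)
  SCF3 : ∀ A B C : V,
      F.map (𝒱.L A B C) ≫ ψ (𝒱.ihom A B) (𝒱.ihom A C) ≫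
          𝒲.imap (𝟙 (F.obj (𝒱.ihom A B))) (ψ A C)
        = ψ B C ≫ 𝒲.L (F.obj A) (F.obj B) (F.obj C) ≫
            𝒲.imap (ψ A B) (𝟙 (𝒲.ihom (F.obj A) (F.obj C)))

section ClosedComonad

variable {V : Type u} [Category.{v} V] (𝒱 : SkewClosedStruct V)
variable (G : V ⥤ V) (cG : ClosedFunctorStruct 𝒱 𝒱 G)
variable (ε : ∀ A : V, G.obj A ⟶ A) (δ : ∀ A : V, G.obj A ⟶ G.obj (G.obj A))

/-- The hom of the skew-closed structure induced by a closed comonad: `⟨A,B⟩ = [GA,B]`. -/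
def comonadIhom (A B : V) : V := 𝒱.ihom (G.obj A) B

/-- The action on morphisms of the induced hom: `⟨f,g⟩ = [Gf,g]`. -/
def comonadImap {A A' B B' : V} (f : A' ⟶ A) (g : B ⟶ B') :
    comonadIhom 𝒱 G A B ⟶ comonadIhom 𝒱 G A' B' := 𝒱.imap (G.map f) g

/-- The induced `i`: the composite `[GI,A] ⟶ [I,A] ⟶ A` of `[ψ₀,1]` and `i`. -/
def comonadI (A : V) : comonadIhom 𝒱 G 𝒱.unit A ⟶ A :=
  𝒱.imap cG.ψ0 (𝟙 A) ≫ 𝒱.i A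

/-- The induced `j`: the composite `I ⟶ [A,A] ⟶ [GA,A]` of `j` and `[ε_A,1]`. -/
def comonadJ (A : V) : 𝒱.unit ⟶ comonadIhom 𝒱 G A A :=
  𝒱.j A ≫ 𝒱.imap (ε A) (𝟙 A)

/-- The comparison morphism `v_{C,A} = [δ_C,1] ∘ ψ_{GC,A} : G[GC,A] ⟶ [GC,GA]`. -/
def comonadV (C A : V) : G.obj (𝒱.ihom (G.obj C) A) ⟶ 𝒱.ihom (G.obj C) (G.obj A) :=
  cG.ψ (G.obj C) A ≫ 𝒱.imap (δ C) (𝟙 (G.obj A))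

/-- The induced `L`: `[v_{C,A},1] ∘ L^{GC} : [GA,B] ⟶ [G[GC,A],[GC,B]]`. -/
def comonadL (C A B : V) :
    comonadIhom 𝒱 G A B ⟶
      comonadIhom 𝒱 G (comonadIhom 𝒱 G C A) (comonadIhom 𝒱 G C B) :=
  𝒱.L (G.obj C) (G.obj A) B ≫ 𝒱.imap (comonadV 𝒱 G cG δ C A) (𝟙 (𝒱.ihom (G.obj C) B))

/-- (Street, "Skew-closed categories", Proposition in §2.)
A closed comonad `(G, ε, δ)` on a left skew-closed category `𝒱` induces another
left skew-closed structure on `𝒱`, with hom `⟨A,B⟩ = [GA,B]`, the same unit,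
`i' = i ∘ [ψ₀,1]`, `j' = [ε,1] ∘ j` and `L' = [v,1] ∘ L^{GC}`:
these data satisfy the five axioms (SCC1)–(SCC5). -/
theorem closed_comonad_skew_closed
    -- `ε` and `δ` are natural transformations:
    (ε_nat : ∀ {A B : V} (f : A ⟶ B), G.map f ≫ ε B = ε A ≫ f)
    (δ_nat : ∀ {A B : V} (f : A ⟶ B), G.map f ≫ δ B = δ A ≫ G.map (G.map f))
    -- comonad laws:
    (counit_left : ∀ A, δ A ≫ ε (G.obj A) = 𝟙 (G.obj A))
    (counit_right : ∀ A, δ A ≫ G.map (ε A) = 𝟙 (G.obj A))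
    (coassoc : ∀ A, δ A ≫ δ (G.obj A) = δ A ≫ G.map (δ A))
    -- `ε : G ⇒ Id` is a closed natural transformation (`Id` the identity closed functor):
    (ε_closed₀ : cG.ψ0 ≫ ε 𝒱.unit = 𝟙 𝒱.unit)
    (ε_closed : ∀ A B : V,
      ε (𝒱.ihom A B) ≫ 𝒱.imap (ε A) (𝟙 B)
        = cG.ψ A B ≫ 𝒱.imap (𝟙 (G.obj A)) (ε B))
    -- `δ : G ⇒ GG` is a closed natural transformation (`GG` the composite closed functor):
    (δ_closed₀ : cG.ψ0 ≫ δ 𝒱.unit = cG.ψ0 ≫ G.map cG.ψ0)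
    (δ_closed : ∀ A B : V,
      δ (𝒱.ihom A B) ≫ G.map (cG.ψ A B) ≫ cG.ψ (G.obj A) (G.obj B) ≫
          𝒱.imap (δ A) (𝟙 (G.obj (G.obj B)))
        = cG.ψ A B ≫ 𝒱.imap (𝟙 (G.obj A)) (δ B)) :
    -- conclusion: the axioms (SCC1)–(SCC5) for the new data
    (∀ A B C D : V,
      comonadL 𝒱 G cG δ A C D ≫
          comonadL 𝒱 G cG δ (comonadIhom 𝒱 G A B) (comonadIhom 𝒱 G A C)
            (comonadIhom 𝒱 G A D) ≫
          comonadImap 𝒱 G (comonadL 𝒱 G cG δ A B C)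
            (𝟙 (comonadIhom 𝒱 G (comonadIhom 𝒱 G A B) (comonadIhom 𝒱 G A D)))
        = comonadL 𝒱 G cG δ B C D ≫
            comonadImap 𝒱 G (𝟙 (comonadIhom 𝒱 G B C)) (comonadL 𝒱 G cG δ A B D)) ∧
    (∀ A C : V,
      comonadL 𝒱 G cG δ A A C ≫
          comonadImap 𝒱 G (comonadJ 𝒱 G ε A) (𝟙 (comonadIhom 𝒱 G A C)) ≫
          comonadI 𝒱 G cG (comonadIhom 𝒱 G A C)
        = 𝟙 (comonadIhom 𝒱 G A C)) ∧
    (∀ A B : V,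
      comonadJ 𝒱 G ε B ≫ comonadL 𝒱 G cG δ A B B
        = comonadJ 𝒱 G ε (comonadIhom 𝒱 G A B)) ∧
    (∀ B C : V,
      comonadL 𝒱 G cG δ 𝒱.unit B C ≫
          comonadImap 𝒱 G (𝟙 (comonadIhom 𝒱 G 𝒱.unit B)) (comonadI 𝒱 G cG C)
        = comonadImap 𝒱 G (comonadI 𝒱 G cG B) (𝟙 C)) ∧
    (comonadJ 𝒱 G ε 𝒱.unit ≫ comonadI 𝒱 G cG 𝒱.unit = 𝟙 𝒱.unit) := by
  -- Fusion of internal-hom maps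
  have fuse : ∀ {A A' A'' B B' B'' : V} (f : A' ⟶ A) (f' : A'' ⟶ A') (g : B ⟶ B') (g' : B' ⟶ B''),
      𝒱.imap f g ≫ 𝒱.imap f' g' = 𝒱.imap (f' ≫ f) (g ≫ g') :=
    fun f f' g g' => (𝒱.imap_comp f f' g g').symm
  have fuse_assoc : ∀ {A A' A'' B B' B'' : V} {Z : V} (f : A' ⟶ A) (f' : A'' ⟶ A')
      (g : B ⟶ B') (g' : B' ⟶ B'') (h : 𝒱.ihom A'' B'' ⟶ Z),
      𝒱.imap f g ≫ 𝒱.imap f' g' ≫ h = 𝒱.imap (f' ≫ f) (g ≫ g') ≫ h := by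
    intro A A' A'' B B' B'' Z f f' g g' h
    rw [← Category.assoc, fuse]
  have swap : ∀ {A A' B B' : V} (f : A' ⟶ A) (g : B ⟶ B'),
      𝒱.imap f (𝟙 B) ≫ 𝒱.imap (𝟙 A') g = 𝒱.imap (𝟙 A) g ≫ 𝒱.imap f (𝟙 B') := by
    intro A A' B B' f g
    rw [fuse, fuse]; simp
  have splitR : ∀ {A B B' B'' : V} (g : B ⟶ B') (g' : B' ⟶ B''),
      𝒱.imap (𝟙 A) (g ≫ g') = 𝒱.imap (𝟙 A) g ≫ 𝒱.imap (𝟙 A) g' := by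
    intro A B B' B'' g g'
    rw [fuse]; simp
  -- `v ∘ [1,ε] = ε` on homs
  have hv : ∀ (A B : V),
      comonadV 𝒱 G cG δ A B ≫ 𝒱.imap (𝟙 (G.obj A)) (ε B) = ε (𝒱.ihom (G.obj A) B) := by
    intro A B
    have h1 : 𝒱.imap (δ A) (𝟙 (G.obj B)) ≫ 𝒱.imap (𝟙 (G.obj A)) (ε B)
        = 𝒱.imap (𝟙 (G.obj (G.obj A))) (ε B) ≫ 𝒱.imap (δ A) (𝟙 B) := by
      rw [fuse, fuse]; simp
    simp only [comonadV, Category.assoc]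
    rw [h1, ← reassoc_of% (ε_closed (G.obj A) B), fuse, counit_left]
    simp [𝒱.imap_id]
  -- the unit computation for SCC2
  have hj : ∀ (A : V),
      cG.ψ0 ≫ G.map (𝒱.j A ≫ 𝒱.imap (ε A) (𝟙 A)) ≫ comonadV 𝒱 G cG δ A A
        = 𝒱.j (G.obj A) := by
    intro A
    have h1 : G.map (𝒱.imap (ε A) (𝟙 A)) ≫ cG.ψ (G.obj A) A
        = cG.ψ A A ≫ 𝒱.imap (G.map (ε A)) (𝟙 (G.obj A)) := by
      simpa using cG.ψ_natural (ε A) (𝟙 A)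
    simp only [comonadV, Functor.map_comp, Category.assoc]
    rw [reassoc_of% h1, reassoc_of% (cG.SCF2 A), fuse, counit_right]
    simp [𝒱.imap_id]
  -- the computation for SCC4
  have hGi : ∀ (B : V),
      comonadV 𝒱 G cG δ 𝒱.unit B ≫ 𝒱.imap cG.ψ0 (𝟙 (G.obj B)) ≫ 𝒱.i (G.obj B)
        = G.map (𝒱.imap cG.ψ0 (𝟙 B) ≫ 𝒱.i B) := by
    intro B
    have h2 : G.map (𝒱.imap cG.ψ0 (𝟙 B)) ≫ cG.ψ 𝒱.unit B
        = cG.ψ (G.obj 𝒱.unit) B ≫ 𝒱.imap (G.map cG.ψ0) (𝟙 (G.obj B)) := by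
      simpa using cG.ψ_natural cG.ψ0 (𝟙 B)
    simp only [comonadV, Category.assoc, Functor.map_comp]
    rw [fuse_assoc, δ_closed₀, 𝒱.imap_comp]
    simp only [Category.assoc]
    rw [← reassoc_of% h2, cG.SCF1 B]
  -- the `n`-computation for SCC1
  have hn : ∀ (A B : V),
      δ (𝒱.ihom (G.obj A) B) ≫ G.map (comonadV 𝒱 G cG δ A B) ≫
          cG.ψ (G.obj A) (G.obj B) ≫ 𝒱.imap (δ A) (𝟙 (G.obj (G.obj B)))
        = cG.ψ (G.obj A) B ≫ 𝒱.imap (δ A) (δ B) := by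
    intro A B
    have h1 : G.map (𝒱.imap (δ A) (𝟙 (G.obj B))) ≫ cG.ψ (G.obj A) (G.obj B)
        = cG.ψ (G.obj (G.obj A)) (G.obj B) ≫
            𝒱.imap (G.map (δ A)) (𝟙 (G.obj (G.obj B))) := by
      simpa using cG.ψ_natural (δ A) (𝟙 (G.obj B))
    simp only [comonadV, Functor.map_comp, Category.assoc]
    rw [reassoc_of% h1, fuse, ← coassoc A, 𝒱.imap_comp,
      reassoc_of% (δ_closed (G.obj A) B), fuse]
    simp
  -- the key comparison for SCC1: `v` is compatible with `L`
  have hm : ∀ (A B C : V),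
      G.map (comonadL 𝒱 G cG δ A B C) ≫
          comonadV 𝒱 G cG δ (𝒱.ihom (G.obj A) B) (𝒱.ihom (G.obj A) C) ≫
          𝒱.imap (𝟙 (G.obj (𝒱.ihom (G.obj A) B))) (comonadV 𝒱 G cG δ A C)
        = comonadV 𝒱 G cG δ B C ≫ 𝒱.L (G.obj A) (G.obj B) (G.obj C) ≫
            𝒱.imap (comonadV 𝒱 G cG δ A B) (𝟙 (𝒱.ihom (G.obj A) (G.obj C))) := by
    intro A B C
    have h1 : G.map (𝒱.imap (comonadV 𝒱 G cG δ A B) (𝟙 (𝒱.ihom (G.obj A) C))) ≫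
          cG.ψ (G.obj (𝒱.ihom (G.obj A) B)) (𝒱.ihom (G.obj A) C)
        = cG.ψ (𝒱.ihom (G.obj A) (G.obj B)) (𝒱.ihom (G.obj A) C) ≫
            𝒱.imap (G.map (comonadV 𝒱 G cG δ A B))
              (𝟙 (G.obj (𝒱.ihom (G.obj A) C))) := by
      simpa using cG.ψ_natural (comonadV 𝒱 G cG δ A B) (𝟙 (𝒱.ihom (G.obj A) C))
    rw [show comonadL 𝒱 G cG δ A B C = 𝒱.L (G.obj A) (G.obj B) C ≫
        𝒱.imap (comonadV 𝒱 G cG δ A B) (𝟙 (𝒱.ihom (G.obj A) C)) from rfl]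
    rw [show comonadV 𝒱 G cG δ (𝒱.ihom (G.obj A) B) (𝒱.ihom (G.obj A) C)
        = cG.ψ (G.obj (𝒱.ihom (G.obj A) B)) (𝒱.ihom (G.obj A) C) ≫
            𝒱.imap (δ (𝒱.ihom (G.obj A) B)) (𝟙 (G.obj (𝒱.ihom (G.obj A) C))) from rfl]
    rw [show comonadV 𝒱 G cG δ A C
        = cG.ψ (G.obj A) C ≫ 𝒱.imap (δ A) (𝟙 (G.obj C)) from rfl]
    erw [Functor.map_comp]
    simp only [Category.assoc]
    erw [Category.assoc]
    rw [splitR]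
    rw [reassoc_of% (swap (δ (𝒱.ihom (G.obj A) B)) (cG.ψ (G.obj A) C))]
    rw [swap (δ (𝒱.ihom (G.obj A) B)) (𝒱.imap (δ A) (𝟙 (G.obj C)))]
    erw [reassoc_of% h1]
    rw [reassoc_of% (swap (G.map (comonadV 𝒱 G cG δ A B)) (cG.ψ (G.obj A) C))]
    erw [reassoc_of% (cG.SCF3 (G.obj A) (G.obj B) C)]
    rw [reassoc_of% (swap (G.map (comonadV 𝒱 G cG δ A B))
      (𝒱.imap (δ A) (𝟙 (G.obj C))))]
    rw [reassoc_of% (swap (cG.ψ (G.obj A) (G.obj B)) (𝒱.imap (δ A) (𝟙 (G.obj C))))]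
    rw [reassoc_of% (𝒱.L_extranatural (δ A) (G.obj (G.obj B)) (G.obj C))]
    rw [fuse_assoc, fuse_assoc, fuse]
    simp only [Category.comp_id, Category.id_comp, Category.assoc]
    rw [hn A B]
    -- now transform the right-hand side
    conv_rhs => rw [show comonadV 𝒱 G cG δ B C
        = cG.ψ (G.obj B) C ≫ 𝒱.imap (δ B) (𝟙 (G.obj C)) from rfl]
    conv_rhs => rw [Category.assoc,
      reassoc_of% (𝒱.L_natural (G.obj A) (δ B) (𝟙 (G.obj C)))]
    conv_rhs => rw [fuse]
    simp only [𝒱.imap_id, Category.comp_id, Category.id_comp]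
    have h2 : comonadV 𝒱 G cG δ A B ≫ 𝒱.imap (𝟙 (G.obj A)) (δ B)
        = cG.ψ (G.obj A) B ≫ 𝒱.imap (δ A) (δ B) := by
      simp only [comonadV, Category.assoc]
      rw [fuse]; simp
    rw [h2]
  refine ⟨?_, ?_, ?_, ?_, ?_⟩
  · -- SCC1
    intro A B C D
    simp only [comonadImap, comonadIhom, CategoryTheory.Functor.map_id]
    trans (𝒱.L (G.obj A) (G.obj C) D ≫
      𝒱.L (G.obj (𝒱.ihom (G.obj A) B)) (𝒱.ihom (G.obj A) (G.obj C))
        (𝒱.ihom (G.obj A) D) ≫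
      𝒱.imap (comonadV 𝒱 G cG δ B C ≫ 𝒱.L (G.obj A) (G.obj B) (G.obj C) ≫
          𝒱.imap (comonadV 𝒱 G cG δ A B) (𝟙 (𝒱.ihom (G.obj A) (G.obj C))))
        (𝟙 (𝒱.ihom (G.obj (𝒱.ihom (G.obj A) B)) (𝒱.ihom (G.obj A) D))))
    · rw [show comonadL 𝒱 G cG δ A C D = 𝒱.L (G.obj A) (G.obj C) D ≫
          𝒱.imap (comonadV 𝒱 G cG δ A C) (𝟙 (𝒱.ihom (G.obj A) D)) from rfl]
      rw [show comonadL 𝒱 G cG δ (𝒱.ihom (G.obj A) B) (𝒱.ihom (G.obj A) C)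
            (𝒱.ihom (G.obj A) D)
          = 𝒱.L (G.obj (𝒱.ihom (G.obj A) B)) (G.obj (𝒱.ihom (G.obj A) C))
              (𝒱.ihom (G.obj A) D) ≫
            𝒱.imap (comonadV 𝒱 G cG δ (𝒱.ihom (G.obj A) B) (𝒱.ihom (G.obj A) C))
              (𝟙 (𝒱.ihom (G.obj (𝒱.ihom (G.obj A) B)) (𝒱.ihom (G.obj A) D))) from rfl]
      simp only [Category.assoc]
      rw [reassoc_of% (𝒱.L_natural (G.obj (𝒱.ihom (G.obj A) B))
        (comonadV 𝒱 G cG δ A C) (𝟙 (𝒱.ihom (G.obj A) D)))]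
      rw [fuse_assoc, fuse]
      simp only [𝒱.imap_id, Category.comp_id, Category.id_comp, Category.assoc]
      erw [hm A B C]
    · symm
      rw [show comonadL 𝒱 G cG δ B C D = 𝒱.L (G.obj B) (G.obj C) D ≫
          𝒱.imap (comonadV 𝒱 G cG δ B C) (𝟙 (𝒱.ihom (G.obj B) D)) from rfl]
      rw [show comonadL 𝒱 G cG δ A B D = 𝒱.L (G.obj A) (G.obj B) D ≫
          𝒱.imap (comonadV 𝒱 G cG δ A B) (𝟙 (𝒱.ihom (G.obj A) D)) from rfl]
      simp only [Category.assoc]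
      rw [splitR]
      rw [reassoc_of% (swap (comonadV 𝒱 G cG δ B C) (𝒱.L (G.obj A) (G.obj B) D))]
      rw [swap (comonadV 𝒱 G cG δ B C)
        (𝒱.imap (comonadV 𝒱 G cG δ A B) (𝟙 (𝒱.ihom (G.obj A) D)))]
      rw [← reassoc_of% (𝒱.SCC1 (G.obj A) (G.obj B) (G.obj C) D)]
      rw [reassoc_of% (swap (𝒱.L (G.obj A) (G.obj B) (G.obj C))
        (𝒱.imap (comonadV 𝒱 G cG δ A B) (𝟙 (𝒱.ihom (G.obj A) D))))]
      rw [reassoc_of% (𝒱.L_extranatural (comonadV 𝒱 G cG δ A B)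
        (𝒱.ihom (G.obj A) (G.obj C)) (𝒱.ihom (G.obj A) D))]
      rw [fuse_assoc, fuse]
      simp only [Category.comp_id, Category.id_comp, Category.assoc]
  · -- SCC2
    intro A C
    simp only [comonadL, comonadJ, comonadI, comonadImap, comonadIhom, Category.assoc]
    rw [fuse_assoc, fuse_assoc]
    simp only [Category.comp_id, Category.id_comp, Category.assoc]
    rw [hj A]
    exact 𝒱.SCC2 (G.obj A) C
  · -- SCC3
    intro A B
    simp only [comonadL, comonadJ, comonadIhom, Category.assoc]
    rw [reassoc_of% (𝒱.L_natural (G.obj A) (ε B) (𝟙 B))]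
    rw [reassoc_of% (𝒱.SCC3 (G.obj A) B)]
    rw [fuse]
    simp only [𝒱.imap_id, Category.comp_id, Category.id_comp]
    rw [hv A B]
  · -- SCC4
    intro B C
    simp only [comonadL, comonadI, comonadImap, comonadIhom,
      CategoryTheory.Functor.map_id, Category.assoc]
    rw [splitR]
    rw [reassoc_of% (swap (comonadV 𝒱 G cG δ 𝒱.unit B) (𝒱.imap cG.ψ0 (𝟙 C)))]
    rw [swap (comonadV 𝒱 G cG δ 𝒱.unit B) (𝒱.i C)]
    rw [reassoc_of% (𝒱.L_extranatural cG.ψ0 (G.obj B) C)]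
    rw [reassoc_of% (swap (𝒱.imap cG.ψ0 (𝟙 (G.obj B))) (𝒱.i C))]
    rw [reassoc_of% (𝒱.SCC4 (G.obj B) C)]
    rw [fuse_assoc, fuse]
    simp only [Category.comp_id, Category.id_comp, Category.assoc]
    rw [hGi B]
  · -- SCC5
    simp only [comonadJ, comonadI, Category.assoc]
    erw [Category.assoc]
    erw [fuse_assoc, ε_closed₀]
    simp only [Category.comp_id, Category.id_comp, 𝒱.imap_id]
    exact 𝒱.SCC5

end ClosedComonad
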